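/- Boundedness of the weighted Hilbert transform on Hölder spaces (case k = 0): for all 0 < α′ < α < 1 there exists a constant C = C(α) > 0 such that for every measurable kernel Φ : ℝ × [−1/2,1/2] → ℂ, 1-periodic in the first variable, with ⦀Φ⦀_{0,α′} := ess sup_{ξ∈[−1/2,1/2]} ‖Φ(·,ξ)‖_{C^{0,α′}} < ∞, and every 1-periodic f ∈ C^{0,α}(ℝ;ℂ), the function T_Φ f(s) := (1/(2πi)) ∫_{−1/2}^{1/2} ((f(s+ξ) − f(s))/ξ) Φ(s,ξ) dξ satisfies ‖T_Φ f‖_{C^{0,α′}} ≤ (C/(α−α′)) ⦀Φ⦀_{0,α′} ‖f‖_{C^{0,α}}. -/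

import Mathlib

open MeasureTheory Real

/-- The weighted Hilbert transform
`T_Φ f(s) = (1/(2πi)) ∫_{-1/2}^{1/2} ((f(s+ξ)-f(s))/ξ) Φ(s,ξ) dξ`. -/
noncomputable def weightedHilbert (Φ : ℝ → ℝ → ℂ) (f : ℝ → ℂ) (s : ℝ) : ℂ :=
  (1 / (2 * (π : ℂ) * Complex.I)) *
    ∫ ξ in (-(1:ℝ)/2)..(1/2), ((f (s + ξ) - f s) / (ξ : ℂ)) * Φ s ξ

lemma holder_continuous {f : ℝ → ℂ} {M a : ℝ} (ha : 0 < a)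
    (hf : ∀ s s', ‖f s - f s'‖ ≤ M * |s - s'| ^ a) : Continuous f := by
  rw [continuous_iff_continuousAt]
  intro x
  rw [ContinuousAt, tendsto_iff_norm_sub_tendsto_zero]
  have hb : Filter.Tendsto (fun y : ℝ => M * |y - x| ^ a) (nhds x) (nhds 0) := by
    have h1 : Filter.Tendsto (fun y : ℝ => |y - x|) (nhds x) (nhds 0) :=
      ((continuous_id.sub continuous_const).abs).tendsto' x 0 (by simp)
    have h2 : Filter.Tendsto (fun t : ℝ => M * t ^ a) (nhds 0) (nhds (M * (0:ℝ) ^ a)) :=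
      (Filter.Tendsto.const_mul M ((Real.continuousAt_rpow_const 0 a (Or.inr ha.le)).tendsto))
    rw [Real.zero_rpow ha.ne', mul_zero] at h2
    exact h2.comp h1
  exact squeeze_zero (fun y => norm_nonneg _) (fun y => hf y x) hb

lemma intable_abs_rpow0 {p : ℝ} (hp : 0 < p) :
    IntervalIntegrable (fun ξ : ℝ => |ξ| ^ (p - 1)) volume 0 (1/2) := by
  have hr := intervalIntegral.intervalIntegrable_rpow' (r := p - 1) (by linarith)
    (a := 0) (b := 1/2)
  have hm : AEStronglyMeasurable (fun ξ : ℝ => |ξ| ^ (p - 1))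
      (volume.restrict (Set.uIoc 0 (1/2))) := by
    rw [Set.uIoc_of_le (by norm_num : (0:ℝ) ≤ 1/2)]
    refine hr.aestronglyMeasurable.congr ?_
    filter_upwards [ae_restrict_mem measurableSet_Ioc] with ξ hξ
    rw [abs_of_pos hξ.1]
  refine hr.mono_fun' hm ?_
  · filter_upwards [ae_restrict_mem measurableSet_uIoc] with ξ hξ
    rw [Set.uIoc_of_le (by norm_num : (0:ℝ) ≤ 1/2)] at hξ
    rw [Real.norm_eq_abs, abs_of_nonneg (Real.rpow_nonneg (abs_nonneg _) _),
      abs_of_pos hξ.1]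

lemma intable_abs_rpow_neg {p : ℝ} (hp : 0 < p) :
    IntervalIntegrable (fun ξ : ℝ => |ξ| ^ (p - 1)) volume (-(1/2):ℝ) 0 := by
  have h := (IntervalIntegrable.iff_comp_neg (f := fun ξ : ℝ => |ξ| ^ (p - 1))).mp (intable_abs_rpow0 hp)
  simp only [abs_neg, neg_zero] at h
  exact h.symm

lemma intable_abs_rpow {p : ℝ} (hp : 0 < p) :
    IntervalIntegrable (fun ξ : ℝ => |ξ| ^ (p - 1)) volume (-(1:ℝ)/2) (1/2) := by
  have e : (-(1:ℝ)/2) = (-(1/2):ℝ) := by norm_num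
  rw [e]
  exact (intable_abs_rpow_neg hp).trans (intable_abs_rpow0 hp)

lemma integral_abs_rpow_le {p : ℝ} (hp : 0 < p) :
    ∫ ξ in (-(1:ℝ)/2)..(1/2), |ξ| ^ (p - 1) ≤ 2 / p := by
  have key : ∫ ξ in (0:ℝ)..(1/2), |ξ| ^ (p - 1) = (1/2 : ℝ) ^ p / p := by
    have h : ∫ ξ in (0:ℝ)..(1/2), |ξ| ^ (p - 1) = ∫ ξ in (0:ℝ)..(1/2), ξ ^ (p - 1) := by
      apply intervalIntegral.integral_congr
      intro ξ hξ
      rw [Set.uIcc_of_le (by norm_num : (0:ℝ) ≤ 1/2)] at hξ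
      simp [abs_of_nonneg hξ.1]
    rw [h, integral_rpow (Or.inl (by linarith))]
    rw [Real.zero_rpow (by linarith : p - 1 + 1 ≠ 0)]
    ring_nf
  have keyneg : ∫ ξ in (-(1/2):ℝ)..(0:ℝ), |ξ| ^ (p - 1) = (1/2 : ℝ) ^ p / p := by
    have h1 : ∫ ξ in (0:ℝ)..(1/2), |(-ξ)| ^ (p - 1)
        = ∫ ξ in (-(1/2):ℝ)..(-0:ℝ), |ξ| ^ (p-1) :=
      intervalIntegral.integral_comp_neg (fun ξ => |ξ| ^ (p - 1))
    simp only [abs_neg, neg_zero] at h1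
    rw [← key, h1]
  have e : (-(1:ℝ)/2) = (-(1/2):ℝ) := by norm_num
  rw [e, ← intervalIntegral.integral_add_adjacent_intervals
      (intable_abs_rpow_neg hp) (intable_abs_rpow0 hp), key, keyneg]
  have h2 : (1/2 : ℝ) ^ p ≤ 1 := Real.rpow_le_one (by norm_num) (by norm_num) hp.le
  rw [← add_div]
  have h3 : ((1:ℝ)/2)^p + (1/2)^p ≤ 2 := by linarith
  gcongr

lemma ptwise_bound {f : ℝ → ℂ} {Φ : ℝ → ℝ → ℂ} {MΦ Mf α : ℝ} (hα0 : 0 < α) (hα : α < 1)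
    (hfh : ∀ s s', ‖f s - f s'‖ ≤ Mf * |s - s'| ^ α) (hMf : 0 ≤ Mf)
    {s ξ : ℝ} (hΦb : ‖Φ s ξ‖ ≤ MΦ) :
    ‖((f (s + ξ) - f s) / (ξ : ℂ)) * Φ s ξ‖ ≤ MΦ * Mf * |ξ| ^ (α - 1) := by
  rcases eq_or_ne ξ 0 with h | h
  · simp [h, Real.zero_rpow (by linarith : α - 1 ≠ 0)]
  · have hξ : (0:ℝ) < |ξ| := abs_pos.2 h
    rw [norm_mul, norm_div, Complex.norm_real, Real.norm_eq_abs]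
    have h1 : ‖f (s + ξ) - f s‖ ≤ Mf * |ξ| ^ α := by simpa using hfh (s + ξ) s
    calc ‖f (s + ξ) - f s‖ / |ξ| * ‖Φ s ξ‖ ≤ Mf * |ξ| ^ α / |ξ| * MΦ :=
          mul_le_mul (by gcongr) hΦb (norm_nonneg _) (by positivity)
      _ = MΦ * Mf * |ξ| ^ (α - 1) := by
          rw [Real.rpow_sub hξ, Real.rpow_one]; ring

lemma diff_bound {f : ℝ → ℂ} {Φ : ℝ → ℝ → ℂ} {MΦ Mf α α' : ℝ}
    (hα'0 : 0 < α') (hα' : α' < α) (hα : α < 1)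
    (hfh : ∀ s s', ‖f s - f s'‖ ≤ Mf * |s - s'| ^ α) (hMf : 0 ≤ Mf) (hMΦ : 0 ≤ MΦ)
    {ξ : ℝ} (hΦb : ∀ s, ‖Φ s ξ‖ ≤ MΦ)
    (hΦh : ∀ s s', ‖Φ s ξ - Φ s' ξ‖ ≤ MΦ * |s - s'| ^ α') (s₁ s₂ : ℝ) :
    ‖((f (s₁ + ξ) - f s₁) / (ξ : ℂ)) * Φ s₁ ξ - ((f (s₂ + ξ) - f s₂) / (ξ : ℂ)) * Φ s₂ ξ‖ ≤
      MΦ * Mf * |s₁ - s₂| ^ α' * (2 * |ξ| ^ (α - α' - 1) + |ξ| ^ (α - 1)) := by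
  have hα0 : 0 < α := hα'0.trans hα'
  rcases eq_or_ne ξ 0 with h | h
  · simp [h, Real.zero_rpow (by linarith : α - 1 ≠ 0),
      Real.zero_rpow (by linarith : α - α' - 1 ≠ 0)]
  have hξ : (0:ℝ) < |ξ| := abs_pos.2 h
  have habs : (0:ℝ) ≤ |s₁ - s₂| := abs_nonneg _
  -- decomposition
  have hdec : ((f (s₁ + ξ) - f s₁) / (ξ : ℂ)) * Φ s₁ ξ - ((f (s₂ + ξ) - f s₂) / (ξ : ℂ)) * Φ s₂ ξ
      = (((f (s₁ + ξ) - f s₁) - (f (s₂ + ξ) - f s₂)) / (ξ : ℂ)) * Φ s₁ ξ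
        + ((f (s₂ + ξ) - f s₂) / (ξ : ℂ)) * (Φ s₁ ξ - Φ s₂ ξ) := by
    ring
  -- numerator bound for the first part
  have hnum : ‖(f (s₁ + ξ) - f s₁) - (f (s₂ + ξ) - f s₂)‖ ≤
      2 * Mf * |s₁ - s₂| ^ α' * |ξ| ^ (α - α') := by
    rcases le_total |ξ| |s₁ - s₂| with hle | hle
    · have e1 : ‖f (s₁ + ξ) - f s₁‖ ≤ Mf * |ξ| ^ α := by simpa using hfh (s₁ + ξ) s₁
      have e2 : ‖f (s₂ + ξ) - f s₂‖ ≤ Mf * |ξ| ^ α := by simpa using hfh (s₂ + ξ) s₂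
      calc ‖(f (s₁ + ξ) - f s₁) - (f (s₂ + ξ) - f s₂)‖
          ≤ ‖f (s₁ + ξ) - f s₁‖ + ‖f (s₂ + ξ) - f s₂‖ := norm_sub_le _ _
        _ ≤ Mf * |ξ| ^ α + Mf * |ξ| ^ α := add_le_add e1 e2
        _ = 2 * Mf * (|ξ| ^ α' * |ξ| ^ (α - α')) := by
            have e : α' + (α - α') = α := by ring
            rw [← Real.rpow_add hξ, e]; ring
        _ ≤ 2 * Mf * (|s₁ - s₂| ^ α' * |ξ| ^ (α - α')) := by
            apply mul_le_mul_of_nonneg_left _ (by positivity : (0:ℝ) ≤ 2 * Mf)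
            exact mul_le_mul_of_nonneg_right
              (Real.rpow_le_rpow (abs_nonneg _) hle hα'0.le)
              (Real.rpow_nonneg (abs_nonneg _) _)
        _ = 2 * Mf * |s₁ - s₂| ^ α' * |ξ| ^ (α - α') := by ring
    · have e3 : ‖f (s₁ + ξ) - f (s₂ + ξ)‖ ≤ Mf * |s₁ - s₂| ^ α := by
        simpa [add_sub_add_right_eq_sub] using hfh (s₁ + ξ) (s₂ + ξ)
      have e4 : ‖f s₁ - f s₂‖ ≤ Mf * |s₁ - s₂| ^ α := hfh s₁ s₂
      calc ‖(f (s₁ + ξ) - f s₁) - (f (s₂ + ξ) - f s₂)‖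
          = ‖(f (s₁ + ξ) - f (s₂ + ξ)) - (f s₁ - f s₂)‖ := by ring_nf
        _ ≤ ‖f (s₁ + ξ) - f (s₂ + ξ)‖ + ‖f s₁ - f s₂‖ := norm_sub_le _ _
        _ ≤ Mf * |s₁ - s₂| ^ α + Mf * |s₁ - s₂| ^ α := add_le_add e3 e4
        _ = 2 * Mf * (|s₁ - s₂| ^ α' * |s₁ - s₂| ^ (α - α')) := by
            rcases eq_or_lt_of_le habs with h0 | h0
            · rw [← h0]
              rw [Real.zero_rpow (by linarith : α ≠ 0),
                Real.zero_rpow (by linarith : α - α' ≠ 0)]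
              ring
            · have e : α' + (α - α') = α := by ring
              rw [← Real.rpow_add h0, e]; ring
        _ ≤ 2 * Mf * (|s₁ - s₂| ^ α' * |ξ| ^ (α - α')) := by
            apply mul_le_mul_of_nonneg_left _ (by positivity : (0:ℝ) ≤ 2 * Mf)
            exact mul_le_mul_of_nonneg_left
              (Real.rpow_le_rpow habs hle (by linarith))
              (Real.rpow_nonneg (abs_nonneg _) _)
        _ = 2 * Mf * |s₁ - s₂| ^ α' * |ξ| ^ (α - α') := by ring
  have hq : |ξ| ^ (α - α') / |ξ| = |ξ| ^ (α - α' - 1) := by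
    rw [Real.rpow_sub hξ (α - α') 1, Real.rpow_one]
  have hq2 : |ξ| ^ α / |ξ| = |ξ| ^ (α - 1) := by
    rw [Real.rpow_sub hξ α 1, Real.rpow_one]
  have hD1 : ‖(((f (s₁ + ξ) - f s₁) - (f (s₂ + ξ) - f s₂)) / (ξ : ℂ)) * Φ s₁ ξ‖ ≤
      2 * (MΦ * Mf) * |s₁ - s₂| ^ α' * |ξ| ^ (α - α' - 1) := by
    rw [norm_mul, norm_div, Complex.norm_real, Real.norm_eq_abs]
    calc ‖(f (s₁ + ξ) - f s₁) - (f (s₂ + ξ) - f s₂)‖ / |ξ| * ‖Φ s₁ ξ‖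
        ≤ (2 * Mf * |s₁ - s₂| ^ α' * |ξ| ^ (α - α')) / |ξ| * MΦ :=
          mul_le_mul (by gcongr) (hΦb s₁) (norm_nonneg _) (by positivity)
      _ = 2 * (MΦ * Mf) * |s₁ - s₂| ^ α' * (|ξ| ^ (α - α') / |ξ|) := by ring
      _ = 2 * (MΦ * Mf) * |s₁ - s₂| ^ α' * |ξ| ^ (α - α' - 1) := by rw [hq]
  have hf2 : ‖f (s₂ + ξ) - f s₂‖ ≤ Mf * |ξ| ^ α := by simpa using hfh (s₂ + ξ) s₂
  have hD2 : ‖((f (s₂ + ξ) - f s₂) / (ξ : ℂ)) * (Φ s₁ ξ - Φ s₂ ξ)‖ ≤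
      MΦ * Mf * |s₁ - s₂| ^ α' * |ξ| ^ (α - 1) := by
    rw [norm_mul, norm_div, Complex.norm_real, Real.norm_eq_abs]
    calc ‖f (s₂ + ξ) - f s₂‖ / |ξ| * ‖Φ s₁ ξ - Φ s₂ ξ‖
        ≤ (Mf * |ξ| ^ α / |ξ|) * (MΦ * |s₁ - s₂| ^ α') :=
          mul_le_mul (by gcongr) (hΦh s₁ s₂) (norm_nonneg _) (by positivity)
      _ = MΦ * Mf * |s₁ - s₂| ^ α' * (|ξ| ^ α / |ξ|) := by ring
      _ = MΦ * Mf * |s₁ - s₂| ^ α' * |ξ| ^ (α - 1) := by rw [hq2]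
  calc ‖((f (s₁ + ξ) - f s₁) / (ξ : ℂ)) * Φ s₁ ξ - ((f (s₂ + ξ) - f s₂) / (ξ : ℂ)) * Φ s₂ ξ‖
      = ‖(((f (s₁ + ξ) - f s₁) - (f (s₂ + ξ) - f s₂)) / (ξ : ℂ)) * Φ s₁ ξ
        + ((f (s₂ + ξ) - f s₂) / (ξ : ℂ)) * (Φ s₁ ξ - Φ s₂ ξ)‖ := by rw [hdec]
    _ ≤ ‖(((f (s₁ + ξ) - f s₁) - (f (s₂ + ξ) - f s₂)) / (ξ : ℂ)) * Φ s₁ ξ‖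
        + ‖((f (s₂ + ξ) - f s₂) / (ξ : ℂ)) * (Φ s₁ ξ - Φ s₂ ξ)‖ := norm_add_le _ _
    _ ≤ 2 * (MΦ * Mf) * |s₁ - s₂| ^ α' * |ξ| ^ (α - α' - 1)
        + MΦ * Mf * |s₁ - s₂| ^ α' * |ξ| ^ (α - 1) := add_le_add hD1 hD2
    _ = MΦ * Mf * |s₁ - s₂| ^ α' * (2 * |ξ| ^ (α - α' - 1) + |ξ| ^ (α - 1)) := by ring

/-- Boundedness of the weighted Hilbert transform on Hölder spaces (case
`k = 0`): for `0 < α' < α < 1` there is `C = C(α) > 0` such that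
`‖T_Φ f‖_{C^{0,α'}} ≤ (C/(α-α')) ⦀Φ⦀_{0,α'} ‖f‖_{C^{0,α}}` for all
`1`-periodic kernels `Φ` and `1`-periodic `f ∈ C^{0,α}`. -/
theorem stmt_3 (α α' : ℝ) (hα'0 : 0 < α') (hα' : α' < α) (hα : α < 1) :
    ∃ C : ℝ, 0 < C ∧
      ∀ (Φ : ℝ → ℝ → ℂ) (f : ℝ → ℂ) (MΦ Mf : ℝ),
        Measurable (Function.uncurry Φ) →
        (∀ ξ : ℝ, Function.Periodic (fun s => Φ s ξ) 1) →
        (∀ᵐ ξ ∂(volume.restrict (Set.Icc (-(1:ℝ)/2) (1/2))),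
          (∀ s : ℝ, ‖Φ s ξ‖ ≤ MΦ) ∧ ∀ s s' : ℝ, ‖Φ s ξ - Φ s' ξ‖ ≤ MΦ * |s - s'| ^ α') →
        Function.Periodic f 1 →
        (∀ s, ‖f s‖ ≤ Mf) →
        (∀ s s', ‖f s - f s'‖ ≤ Mf * |s - s'| ^ α) →
        ∀ s s₁ s₂ : ℝ, s₁ ≠ s₂ →
          ‖weightedHilbert Φ f s‖ +
              ‖weightedHilbert Φ f s₁ - weightedHilbert Φ f s₂‖ / |s₁ - s₂| ^ α' ≤
            C / (α - α') * MΦ * Mf := by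
  have hα0 : 0 < α := hα'0.trans hα'
  have hd0 : 0 < α - α' := by linarith
  refine ⟨(α - α') * (4 / α + 4 / (α - α')), by positivity, ?_⟩
  intro Φ f MΦ Mf hΦm hΦper hΦae hfper hfb hfh s s₁ s₂ hs12
  have hMf : 0 ≤ Mf := le_trans (norm_nonneg _) (hfb 0)
  have hMΦ : 0 ≤ MΦ := by
    have hne : volume.restrict (Set.Icc (-(1:ℝ)/2) (1/2)) ≠ 0 := by
      rw [Ne, Measure.restrict_eq_zero, Real.volume_Icc]
      norm_num
    haveI : (ae (volume.restrict (Set.Icc (-(1:ℝ)/2) (1/2)))).NeBot := ae_neBot.mpr hne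
    obtain ⟨ξ₀, hb, _⟩ := hΦae.exists
    exact le_trans (norm_nonneg _) (hb 0)
  have hfc : Continuous f := holder_continuous hα0 hfh
  -- constant norm bound
  have hc : ‖(1 / (2 * (π:ℂ) * Complex.I))‖ ≤ 1 := by
    have hnc : ‖2 * (π:ℂ) * Complex.I‖ = 2 * π := by
      simp [norm_mul, Complex.norm_I, Complex.norm_real, abs_of_pos Real.pi_pos]
    rw [norm_div, norm_one, hnc, div_le_one (by positivity)]
    linarith [Real.pi_gt_three]
  -- ae properties on the integration interval
  have hsub : Set.uIoc (-(1:ℝ)/2) (1/2) ⊆ Set.Icc (-(1:ℝ)/2) (1/2) := by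
    rw [Set.uIoc_of_le (by norm_num : (-(1:ℝ)/2) ≤ 1/2)]
    exact Set.Ioc_subset_Icc_self
  have hΦae' : ∀ᵐ ξ ∂(volume.restrict (Set.uIoc (-(1:ℝ)/2) (1/2))),
      (∀ s : ℝ, ‖Φ s ξ‖ ≤ MΦ) ∧ ∀ s s' : ℝ, ‖Φ s ξ - Φ s' ξ‖ ≤ MΦ * |s - s'| ^ α' :=
    ae_restrict_of_ae_restrict_of_subset hsub hΦae
  -- measurability of integrands
  have hgm : ∀ t : ℝ, AEStronglyMeasurable (fun ξ => ((f (t + ξ) - f t) / (ξ:ℂ)) * Φ t ξ)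
      (volume.restrict (Set.uIoc (-(1:ℝ)/2) (1/2))) := by
    intro t
    exact ((((hfc.comp (continuous_const.add continuous_id)).measurable.sub
      measurable_const).div Complex.measurable_ofReal).mul hΦm.of_uncurry_left).aestronglyMeasurable
  -- integrability of integrands
  have hint : ∀ t : ℝ, IntervalIntegrable (fun ξ => ((f (t + ξ) - f t) / (ξ:ℂ)) * Φ t ξ)
      volume (-(1:ℝ)/2) (1/2) := by
    intro t
    refine ((intable_abs_rpow hα0).const_mul (MΦ * Mf)).mono_fun' (hgm t) ?_
    filter_upwards [hΦae'] with ξ hξ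
    simpa [Real.norm_eq_abs, abs_of_nonneg
        (mul_nonneg (mul_nonneg hMΦ hMf) (Real.rpow_nonneg (abs_nonneg ξ) _)), mul_assoc] using
      ptwise_bound hα0 hα hfh hMf (hξ.1 t)
  -- sup bound
  have hsup : ∀ t : ℝ, ‖weightedHilbert Φ f t‖ ≤ MΦ * Mf * (2 / α) := by
    intro t
    rw [weightedHilbert, norm_mul]
    have hb : ‖∫ ξ in (-(1:ℝ)/2)..(1/2), ((f (t + ξ) - f t) / (ξ:ℂ)) * Φ t ξ‖ ≤
        |∫ ξ in (-(1:ℝ)/2)..(1/2), MΦ * Mf * |ξ| ^ (α - 1)| := by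
      apply intervalIntegral.norm_integral_le_abs_of_norm_le
      · filter_upwards [hΦae'] with ξ hξ
        exact ptwise_bound hα0 hα hfh hMf (hξ.1 t)
      · simpa [mul_assoc] using (intable_abs_rpow hα0).const_mul (MΦ * Mf)
    have hval : |∫ ξ in (-(1:ℝ)/2)..(1/2), MΦ * Mf * |ξ| ^ (α - 1)| ≤ MΦ * Mf * (2 / α) := by
      have hnn : (0:ℝ) ≤ ∫ ξ in (-(1:ℝ)/2)..(1/2), MΦ * Mf * |ξ| ^ (α - 1) := by
        apply intervalIntegral.integral_nonneg (by norm_num : (-(1:ℝ)/2) ≤ 1/2)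
        intro x _
        positivity
      rw [abs_of_nonneg hnn]
      have : ∫ ξ in (-(1:ℝ)/2)..(1/2), MΦ * Mf * |ξ| ^ (α - 1)
          = (MΦ * Mf) * ∫ ξ in (-(1:ℝ)/2)..(1/2), |ξ| ^ (α - 1) := by
        rw [intervalIntegral.integral_const_mul]
      rw [this]
      exact mul_le_mul_of_nonneg_left (integral_abs_rpow_le hα0) (mul_nonneg hMΦ hMf)
    calc ‖(1 / (2 * (π:ℂ) * Complex.I))‖ * ‖∫ ξ in (-(1:ℝ)/2)..(1/2),
          ((f (t + ξ) - f t) / (ξ:ℂ)) * Φ t ξ‖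
        ≤ 1 * (MΦ * Mf * (2 / α)) := by
          apply mul_le_mul hc (hb.trans hval) (norm_nonneg _) zero_le_one
      _ = MΦ * Mf * (2 / α) := one_mul _
  -- difference bound
  have hpow : (0:ℝ) < |s₁ - s₂| ^ α' :=
    Real.rpow_pos_of_pos (abs_pos.2 (sub_ne_zero.2 hs12)) _
  have hdiff : ‖weightedHilbert Φ f s₁ - weightedHilbert Φ f s₂‖ ≤
      MΦ * Mf * |s₁ - s₂| ^ α' * (2 * (2 / (α - α')) + 2 / α) := by
    rw [weightedHilbert, weightedHilbert, ← mul_sub, norm_mul,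
      ← intervalIntegral.integral_sub (hint s₁) (hint s₂)]
    set K := MΦ * Mf * |s₁ - s₂| ^ α' with hK
    have hKnn : 0 ≤ K := by positivity
    have hmajint : IntervalIntegrable
        (fun ξ : ℝ => K * (2 * |ξ| ^ (α - α' - 1) + |ξ| ^ (α - 1)))
        volume (-(1:ℝ)/2) (1/2) := by
      exact (((intable_abs_rpow hd0).const_mul 2).add (intable_abs_rpow hα0)).const_mul K
    have hb : ‖∫ ξ in (-(1:ℝ)/2)..(1/2),
        (((f (s₁ + ξ) - f s₁) / (ξ:ℂ)) * Φ s₁ ξ - ((f (s₂ + ξ) - f s₂) / (ξ:ℂ)) * Φ s₂ ξ)‖ ≤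
        |∫ ξ in (-(1:ℝ)/2)..(1/2), K * (2 * |ξ| ^ (α - α' - 1) + |ξ| ^ (α - 1))| := by
      apply intervalIntegral.norm_integral_le_abs_of_norm_le _ hmajint
      filter_upwards [hΦae'] with ξ hξ
      exact diff_bound hα'0 hα' hα hfh hMf hMΦ hξ.1 hξ.2 s₁ s₂
    have hval : |∫ ξ in (-(1:ℝ)/2)..(1/2), K * (2 * |ξ| ^ (α - α' - 1) + |ξ| ^ (α - 1))| ≤
        K * (2 * (2 / (α - α')) + 2 / α) := by
      have hnn : (0:ℝ) ≤ ∫ ξ in (-(1:ℝ)/2)..(1/2), K * (2 * |ξ| ^ (α - α' - 1) + |ξ| ^ (α - 1)) := by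
        apply intervalIntegral.integral_nonneg (by norm_num : (-(1:ℝ)/2) ≤ 1/2)
        intro x _
        positivity
      rw [abs_of_nonneg hnn, intervalIntegral.integral_const_mul]
      apply mul_le_mul_of_nonneg_left _ hKnn
      rw [intervalIntegral.integral_add ((intable_abs_rpow hd0).const_mul 2)
        (intable_abs_rpow hα0), intervalIntegral.integral_const_mul]
      have i1 := integral_abs_rpow_le hd0
      have i2 := integral_abs_rpow_le hα0
      have e1 : α - α' - 1 = (α - α') - 1 := by ring
      nlinarith [i1, i2]
    calc ‖(1 / (2 * (π:ℂ) * Complex.I))‖ * ‖∫ ξ in (-(1:ℝ)/2)..(1/2),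
          (((f (s₁ + ξ) - f s₁) / (ξ:ℂ)) * Φ s₁ ξ - ((f (s₂ + ξ) - f s₂) / (ξ:ℂ)) * Φ s₂ ξ)‖
        ≤ 1 * (K * (2 * (2 / (α - α')) + 2 / α)) :=
          mul_le_mul hc (hb.trans hval) (norm_nonneg _) zero_le_one
      _ = K * (2 * (2 / (α - α')) + 2 / α) := one_mul _
  -- conclusion
  have hstep : ‖weightedHilbert Φ f s₁ - weightedHilbert Φ f s₂‖ / |s₁ - s₂| ^ α' ≤
      MΦ * Mf * (2 * (2 / (α - α')) + 2 / α) := by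
    rw [div_le_iff₀ hpow]
    calc ‖weightedHilbert Φ f s₁ - weightedHilbert Φ f s₂‖
        ≤ MΦ * Mf * |s₁ - s₂| ^ α' * (2 * (2 / (α - α')) + 2 / α) := hdiff
      _ = MΦ * Mf * (2 * (2 / (α - α')) + 2 / α) * |s₁ - s₂| ^ α' := by ring
  have hC : (α - α') * (4 / α + 4 / (α - α')) / (α - α') * MΦ * Mf
      = MΦ * Mf * (4 / α + 4 / (α - α')) := by
    field_simp
  rw [hC]
  calc ‖weightedHilbert Φ f s‖ + ‖weightedHilbert Φ f s₁ - weightedHilbert Φ f s₂‖ / |s₁ - s₂| ^ α'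
      ≤ MΦ * Mf * (2 / α) + MΦ * Mf * (2 * (2 / (α - α')) + 2 / α) := add_le_add (hsup s) hstep
    _ = MΦ * Mf * (4 / α + 4 / (α - α')) := by ring
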